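/- Let G be a graph and S a tree-structured set with elimination tree T. Then for every connected component C of G - S, the set S(C) of vertices of S having a neighbor in C is a chain in the ancestor order of T (every two elements of S(C) are comparable). -/

import Mathlib

/-- `C` is (the vertex set of) a connected component of the subgraph of `G` induced by `A`. -/
def IsCompOf {V : Type*} (G : SimpleGraph V) (A : Set V) (C : Set V) : Prop :=
  ∃ c : (G.induce A).ConnectedComponent, C = Subtype.val '' c.supp

/-- `S` is tree-structured with elimination tree given by the ancestor relation `anc`
(transported along the bijection to the vertex set of the tree): `anc` restricted to `S`
is a partial order, ancestors of any element form a chain, there is a root (if `S ≠ ∅`),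
and every path in `G` between two vertices `u, v ∈ S` contains a vertex `w ∈ S` that is a
common ancestor of `u` and `v`. -/
def IsElimTree {V : Type*} (G : SimpleGraph V) (S : Set V) (anc : V → V → Prop) : Prop :=
  (∀ u ∈ S, anc u u) ∧
  (∀ u ∈ S, ∀ v ∈ S, anc u v → anc v u → u = v) ∧
  (∀ u ∈ S, ∀ v ∈ S, ∀ w ∈ S, anc u v → anc v w → anc u w) ∧
  (∀ u ∈ S, ∀ v ∈ S, ∀ w ∈ S, anc u w → anc v w → anc u v ∨ anc v u) ∧
  (S.Nonempty → ∃ r ∈ S, ∀ u ∈ S, anc r u) ∧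
  (∀ u ∈ S, ∀ v ∈ S, ∀ p : G.Walk u v, ∃ w ∈ p.support, w ∈ S ∧ anc w u ∧ anc w v)

/-- The elimination tree has depth at most `k`: every element of `S` has at most `k`
ancestors (including itself). -/
def ElimDepthLE {V : Type*} (S : Set V) (anc : V → V → Prop) (k : ℕ) : Prop :=
  ∀ u ∈ S, {w ∈ S | anc w u}.ncard ≤ k

/-- If `S` is tree-structured with elimination tree `anc`, then for every connected
component `C` of `G - S`, the vertices of `S` having a neighbor in `C` form a chain
in the ancestor order. -/
theorem stmt9 {V : Type*} [Fintype V] (G : SimpleGraph V) (S : Set V)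
    (anc : V → V → Prop) (hT : IsElimTree G S anc)
    (C : Set V) (hC : IsCompOf G Sᶜ C) :
    ∀ u ∈ S, ∀ v ∈ S, (∃ c ∈ C, G.Adj u c) → (∃ c ∈ C, G.Adj v c) →
      anc u v ∨ anc v u := by
  obtain ⟨comp, rfl⟩ := hC
  rintro u hu v hv ⟨c1, ⟨x1, hx1, rfl⟩, hadj1⟩ ⟨c2, ⟨x2, hx2, rfl⟩, hadj2⟩
  rw [SimpleGraph.ConnectedComponent.mem_supp_iff] at hx1 hx2
  obtain ⟨q⟩ := SimpleGraph.ConnectedComponent.exact (hx1.trans hx2.symm)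
  -- map the walk into G
  set f : G.induce Sᶜ ↪g G := SimpleGraph.Embedding.induce Sᶜ
  have hq' : ∀ y ∈ (q.map f.toHom).support, y ∈ Sᶜ := by
    intro y hy
    rw [SimpleGraph.Walk.support_map, List.mem_map] at hy
    obtain ⟨z, _, rfl⟩ := hy
    exact z.2
  set p : G.Walk u v :=
    SimpleGraph.Walk.cons hadj1
      ((q.map f.toHom).append (SimpleGraph.Walk.cons hadj2.symm SimpleGraph.Walk.nil))
  obtain ⟨w, hwsup, hwS, hwu, hwv⟩ := hT.2.2.2.2.2 u hu v hv p
  have hmem : w = u ∨ w ∈ (q.map f.toHom).support ∨ w = v := by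
    simp only [p, SimpleGraph.Walk.support_cons, SimpleGraph.Walk.support_append,
      SimpleGraph.Walk.support_nil, List.mem_cons, List.mem_append] at hwsup
    erw [SimpleGraph.Walk.support_cons, SimpleGraph.Walk.support_append,
      SimpleGraph.Walk.support_cons, SimpleGraph.Walk.support_nil] at hwsup
    simp only [List.mem_cons, List.mem_append] at hwsup
    rcases hwsup with h | h | h
    · exact Or.inl h
    · exact Or.inr (Or.inl h)
    · simp only [List.tail_cons, List.mem_singleton] at h
      exact Or.inr (Or.inr h)
  rcases hmem with rfl | h | rfl
  · exact Or.inl hwv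
  · exact absurd hwS (hq' w h)
  · exact Or.inr hwu
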